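/- Fix an outcome ô ∈ {Reject, Accept}^N. Let D ⊆ C_ô, let F ⊆ ℝ^N be a set with F ∩ C = p_ô + D, and set G = p_ô + R(D). Then ∂F ∩ int(C) = ∂G ∩ int(C). -/

import Mathlib

open MeasureTheory
open scoped ENNReal

/-- Possible outcomes of a test on a single coin. -/
inductive Outcome : Type
  | Reject : Outcome
  | Accept : Outcome
deriving DecidableEq

/-- The cube `C = [p₀, q₀]^N ⊆ ℝ^N`. -/
def cube (N : ℕ) (p₀ q₀ : ℝ) : Set (EuclideanSpace ℝ (Fin N)) :=
  {x | ∀ i, x i ∈ Set.Icc p₀ q₀}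

/-- The corner `p_ô` of the cube `[p₀, q₀]^N` associated with the outcome vector `ô`:
`(p_ô)ᵢ = p₀` if `ôᵢ = Reject` and `(p_ô)ᵢ = q₀` if `ôᵢ = Accept`. -/
noncomputable def corner {N : ℕ} (p₀ q₀ : ℝ) (o : Fin N → Outcome) :
    EuclideanSpace ℝ (Fin N) :=
  WithLp.toLp 2 (fun i => if o i = Outcome.Accept then q₀ else p₀)

/-- The box `C_ô = ∏ᵢ Jᵢ` with `Jᵢ = [0, ε]` if `ôᵢ = Reject` and `Jᵢ = [−ε, 0]` if
`ôᵢ = Accept`, where `ε = q₀ − p₀`; it satisfies `C = p_ô + C_ô`. -/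
def cornerBox {N : ℕ} (p₀ q₀ : ℝ) (o : Fin N → Outcome) :
    Set (EuclideanSpace ℝ (Fin N)) :=
  {x | ∀ i, if o i = Outcome.Accept then x i ∈ Set.Icc (-(q₀ - p₀)) 0
    else x i ∈ Set.Icc 0 (q₀ - p₀)}

/-- `Y_ô`: a point `p` of `∂C` *agrees* with the outcome `ô` if there is no coordinate `i` with
(`pᵢ = p₀` and `ôᵢ = Accept`) or (`pᵢ = q₀` and `ôᵢ = Reject`). -/
def agreeSet {N : ℕ} (p₀ q₀ : ℝ) (o : Fin N → Outcome) :
    Set (EuclideanSpace ℝ (Fin N)) :=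
  {p | p ∈ frontier (cube N p₀ q₀) ∧
    ∀ i, ¬((p i = p₀ ∧ o i = Outcome.Accept) ∨ (p i = q₀ ∧ o i = Outcome.Reject))}

/-- The real sign `±1` associated to a Boolean. -/
noncomputable def sgn (b : Bool) : ℝ := if b then 1 else -1

/-- The reflection `R(S; σ) = {σ ∗ x : x ∈ S}` of a set `S ⊆ ℝ^N` by a sign vector `σ`,
where `∗` denotes componentwise multiplication. -/
noncomputable def reflectSet {N : ℕ} (σ : Fin N → Bool)
    (S : Set (EuclideanSpace ℝ (Fin N))) : Set (EuclideanSpace ℝ (Fin N)) :=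
  (fun x => (WithLp.toLp 2 (fun i => sgn (σ i) * x i) : EuclideanSpace ℝ (Fin N))) '' S

/-- The union `R(S) = ⋃_σ R(S; σ)` of all `2^N` coordinate reflections of `S`. -/
noncomputable def reflectAll {N : ℕ} (S : Set (EuclideanSpace ℝ (Fin N))) :
    Set (EuclideanSpace ℝ (Fin N)) :=
  ⋃ σ : Fin N → Bool, reflectSet σ S

/-- The translate `v + S` of a set `S ⊆ ℝ^N`. -/
def translateSet {N : ℕ} (v : EuclideanSpace ℝ (Fin N))
    (S : Set (EuclideanSpace ℝ (Fin N))) : Set (EuclideanSpace ℝ (Fin N)) :=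
  (fun x => v + x) '' S

/-- Frontier is a local notion: sets agreeing on an open set have equal frontier there. -/
theorem frontier_inter_open_eq' {X : Type*} [TopologicalSpace X] {U : Set X}
    (hU : IsOpen U) {s t : Set X} (h : s ∩ U = t ∩ U) :
    frontier s ∩ U = frontier t ∩ U := by
  have hc : ∀ s : Set X, closure s ∩ U = closure (s ∩ U) ∩ U := by
    intro s
    apply Set.Subset.antisymm
    · rintro x ⟨hx, hxU⟩
      refine ⟨?_, hxU⟩
      have := hU.inter_closure (s := U) (t := s) ⟨hxU, hx⟩
      rwa [Set.inter_comm] at this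
    · rintro x ⟨hx, hxU⟩
      exact ⟨closure_mono Set.inter_subset_left hx, hxU⟩
  have hi : ∀ s : Set X, interior s ∩ U = interior (s ∩ U) := by
    intro s; rw [interior_inter, hU.interior_eq]
  have key : ∀ s : Set X, frontier s ∩ U = (closure (s ∩ U) ∩ U) \ interior (s ∩ U) := by
    intro s
    ext x
    have h1 := Set.ext_iff.1 (hc s) x
    have h2 := Set.ext_iff.1 (hi s) x
    simp only [frontier, Set.mem_inter_iff, Set.mem_diff] at *
    tauto
  rw [key s, key t, h]

/-- **Boundaries agree in the interior of the cube.**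
For an outcome `ô`, a subset `D ⊆ C_ô`, a set `F` with `F ∩ C = p_ô + D`, and
`G = p_ô + R(D)`, we have `∂F ∩ int(C) = ∂G ∩ int(C)`. -/
theorem stmt_19 {N : ℕ} (hN : 1 ≤ N) (p₀ q₀ : ℝ) (hpq : p₀ < q₀)
    (o : Fin N → Outcome) (D : Set (EuclideanSpace ℝ (Fin N)))
    (hD : D ⊆ cornerBox p₀ q₀ o)
    (F : Set (EuclideanSpace ℝ (Fin N)))
    (hF : F ∩ cube N p₀ q₀ = translateSet (corner p₀ q₀ o) D) :
    frontier F ∩ interior (cube N p₀ q₀) =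
      frontier (translateSet (corner p₀ q₀ o) (reflectAll D)) ∩ interior (cube N p₀ q₀) := by
  apply frontier_inter_open_eq' isOpen_interior
  have hint : interior (cube N p₀ q₀) ⊆ cube N p₀ q₀ := interior_subset
  -- the key fact: for y in the cube, membership in the two sets coincides
  have key : ∀ y ∈ cube N p₀ q₀,
      (y ∈ translateSet (corner p₀ q₀ o) D ↔
        y ∈ translateSet (corner p₀ q₀ o) (reflectAll D)) := by
    intro y hyC
    constructor
    · rintro ⟨x, hxD, hxy⟩
      refine ⟨x, ?_, hxy⟩
      refine Set.mem_iUnion.2 ⟨fun _ => true, ⟨x, hxD, ?_⟩⟩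
      ext i; simp [sgn]
    · rintro ⟨z, hz, hzy⟩
      obtain ⟨σ, x, hxD, hxz⟩ := Set.mem_iUnion.1 hz
      have hzx : z = x := by
        rw [← hxz]
        ext i
        show sgn (σ i) * x i = x i
        have hyi : y i ∈ Set.Icc p₀ q₀ := hyC i
        have hyeq : y i = corner p₀ q₀ o i + z i := by
          rw [← hzy]; rfl
        have hxi := hD hxD i
        have hzi : z i = sgn (σ i) * x i := by rw [← hxz]
        by_cases ho : o i = Outcome.Accept
        · simp only [ho, if_true] at hxi
          have hcorn : corner p₀ q₀ o i = q₀ := by simp [corner, ho]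
          cases hσ : σ i with
          | true => simp [sgn, hσ]
          | false =>
            have : sgn (σ i) = -1 := by simp [sgn, hσ]
            have hx0 : x i = 0 := by
              rw [this] at hzi
              have h1 := hyi.2
              rw [hyeq, hcorn, hzi] at h1
              have h2 := hxi.2
              linarith
            simp [sgn, hx0]
        · simp only [ho, if_false] at hxi
          have hcorn : corner p₀ q₀ o i = p₀ := by simp [corner, ho]
          cases hσ : σ i with
          | true => simp [sgn, hσ]
          | false =>
            have : sgn (σ i) = -1 := by simp [sgn, hσ]
            have hx0 : x i = 0 := by
              rw [this] at hzi
              have h1 := hyi.1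
              rw [hyeq, hcorn, hzi] at h1
              have h2 := hxi.1
              linarith
            simp [sgn, hx0]
      exact ⟨x, hxD, by rw [← hzx]; exact hzy⟩
  ext y
  simp only [Set.mem_inter_iff]
  constructor
  · rintro ⟨hyF, hyI⟩
    have hyC := hint hyI
    have : y ∈ translateSet (corner p₀ q₀ o) D := hF ▸ ⟨hyF, hyC⟩
    exact ⟨(key y hyC).1 this, hyI⟩
  · rintro ⟨hyG, hyI⟩
    have hyC := hint hyI
    have : y ∈ translateSet (corner p₀ q₀ o) D := (key y hyC).2 hyG
    have : y ∈ F ∩ cube N p₀ q₀ := hF ▸ this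
    exact ⟨this.1, hyI⟩
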